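/- Let V be a real vector space, ν ∈ ℝ with ν ≠ 1 and ν ≠ −1, and U : V^3 → ℝ a trilinear map with ξ_ν·U = U. Then for all x,y,z ∈ V the following four identities hold, where A := (ν²−ν+1)/(ν²−1), A' := (ν²−2ν)/(ν²−1), B := (2ν−1)/(ν²−1): U(z,y,x) = A·U(x,y,z) − B·U(x,z,y); U(z,x,y) = −A'·U(x,y,z) − A·U(x,z,y); U(y,z,x) = −B·U(x,y,z) + A·U(x,z,y); U(y,x,z) = −A·U(x,y,z) − A'·U(x,z,y). -/

import Mathlib

/-- Action of a group ring element `a ∈ ℝ[S_r]` on an `r`-multilinear map: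
`(aT)(v₁,…,v_r) = Σ_p a(p)·T(v_{p(1)},…,v_{p(r)})`. -/
noncomputable def gact {V : Type} [AddCommGroup V] [Module ℝ V] {r : ℕ}
    (a : MonoidAlgebra ℝ (Equiv.Perm (Fin r)))
    (T : MultilinearMap ℝ (fun _ : Fin r => V) ℝ) :
    MultilinearMap ℝ (fun _ : Fin r => V) ℝ :=
  ∑ p : Equiv.Perm (Fin r), a.coeff p • T.domDomCongr p
/-- `ξ_ν := (1/3)(id + ν·(2 3) + (1−ν)·(1 2) − ν·(1 2 3) + (ν−1)·(1 3 2) − (1 3)) ∈ ℝ[S_3]`,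
with `0`-based indices in `Fin 3`; `finRotate 3` is the cycle `(1 2 3)`. -/
noncomputable def xi (ν : ℝ) : MonoidAlgebra ℝ (Equiv.Perm (Fin 3)) :=
  (1/3 : ℝ) • (MonoidAlgebra.single 1 1 + MonoidAlgebra.single (Equiv.swap 1 2) ν +
    MonoidAlgebra.single (Equiv.swap 0 1) (1 - ν) - MonoidAlgebra.single (finRotate 3) ν +
    MonoidAlgebra.single (finRotate 3)⁻¹ (ν - 1) - MonoidAlgebra.single (Equiv.swap 0 2) 1)

private lemma xi_coeff (ν : ℝ) (p : Equiv.Perm (Fin 3)) :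
    (xi ν).coeff p = 1/3 * ((if (1 : Equiv.Perm (Fin 3)) = p then (1:ℝ) else 0) +
      (if Equiv.swap 1 2 = p then ν else 0) + (if Equiv.swap 0 1 = p then 1 - ν else 0) -
      (if finRotate 3 = p then ν else 0) + (if (finRotate 3)⁻¹ = p then ν - 1 else 0) -
      (if Equiv.swap 0 2 = p then (1:ℝ) else 0)) := by
  rw [xi]
  simp only [MonoidAlgebra.coeff_smul, MonoidAlgebra.coeff_sub, MonoidAlgebra.coeff_add,
    MonoidAlgebra.coeff_single]
  rw [Finsupp.smul_apply]
  rw [Finsupp.sub_apply, Finsupp.add_apply, Finsupp.sub_apply, Finsupp.add_apply,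
    Finsupp.add_apply]
  rw [Finsupp.single_apply, Finsupp.single_apply, Finsupp.single_apply,
    Finsupp.single_apply, Finsupp.single_apply, Finsupp.single_apply]
  rw [smul_eq_mul]

section perm_tuples
variable {V : Type} [AddCommGroup V] [Module ℝ V]

private lemma tup12 (a b c : V) :
    (fun i => (![a,b,c] : Fin 3 → V) (Equiv.swap 1 2 i)) = ![a,c,b] := by
  funext i; fin_cases i <;> rfl

private lemma tup01 (a b c : V) :
    (fun i => (![a,b,c] : Fin 3 → V) (Equiv.swap 0 1 i)) = ![b,a,c] := by
  funext i; fin_cases i <;> rfl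

private lemma tup02 (a b c : V) :
    (fun i => (![a,b,c] : Fin 3 → V) (Equiv.swap 0 2 i)) = ![c,b,a] := by
  funext i; fin_cases i <;> rfl

private lemma tupc (a b c : V) :
    (fun i => (![a,b,c] : Fin 3 → V) (finRotate 3 i)) = ![b,c,a] := by
  funext i; fin_cases i <;> rfl

private lemma tupci (a b c : V) :
    (fun i => (![a,b,c] : Fin 3 → V) ((finRotate 3)⁻¹ i)) = ![c,a,b] := by
  funext i; fin_cases i <;> rfl

end perm_tuples

theorem stmt_17 (V : Type) [AddCommGroup V] [Module ℝ V]
    (ν : ℝ) (hν1 : ν ≠ 1) (hν2 : ν ≠ -1)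
    (U : MultilinearMap ℝ (fun _ : Fin 3 => V) ℝ) (hU : gact (xi ν) U = U) :
    ∀ x y z : V,
      U ![z, y, x] = ((ν^2 - ν + 1)/(ν^2 - 1)) * U ![x, y, z] -
          ((2*ν - 1)/(ν^2 - 1)) * U ![x, z, y] ∧
      U ![z, x, y] = -((ν^2 - 2*ν)/(ν^2 - 1)) * U ![x, y, z] -
          ((ν^2 - ν + 1)/(ν^2 - 1)) * U ![x, z, y] ∧
      U ![y, z, x] = -((2*ν - 1)/(ν^2 - 1)) * U ![x, y, z] +
          ((ν^2 - ν + 1)/(ν^2 - 1)) * U ![x, z, y] ∧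
      U ![y, x, z] = -((ν^2 - ν + 1)/(ν^2 - 1)) * U ![x, y, z] -
          ((ν^2 - 2*ν)/(ν^2 - 1)) * U ![x, z, y] := by
  have key : ∀ v : Fin 3 → V,
      3 * U v = U v + ν * U (fun i => v (Equiv.swap 1 2 i)) +
        (1-ν) * U (fun i => v (Equiv.swap 0 1 i)) - ν * U (fun i => v (finRotate 3 i)) +
        (ν-1) * U (fun i => v ((finRotate 3)⁻¹ i)) - U (fun i => v (Equiv.swap 0 2 i)) := by
    intro v
    have huniv : (Finset.univ : Finset (Equiv.Perm (Fin 3))) =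
        {1, Equiv.swap 0 1, Equiv.swap 0 2, Equiv.swap 1 2, finRotate 3, (finRotate 3)⁻¹} := by
      decide
    have h := DFunLike.congr_fun hU v
    rw [gact, huniv, MultilinearMap.sum_apply] at h
    rw [Finset.sum_insert (by decide), Finset.sum_insert (by decide),
      Finset.sum_insert (by decide), Finset.sum_insert (by decide),
      Finset.sum_insert (by decide), Finset.sum_singleton] at h
    simp only [MultilinearMap.smul_apply, MultilinearMap.domDomCongr_apply,
      smul_eq_mul, xi_coeff] at h
    norm_num [-finRotate_succ_apply, show ¬(Equiv.swap (0:Fin 3) 1 = 1) from by decide,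
      show ¬(Equiv.swap (1:Fin 3) 2 = 1) from by decide,
      show ¬(Equiv.swap (0:Fin 3) 2 = 1) from by decide,
      show ¬(finRotate 3 = (1 : Equiv.Perm (Fin 3))) from by decide,
      show ¬((finRotate 3)⁻¹ = (1 : Equiv.Perm (Fin 3))) from by decide,
      show ¬((1:Equiv.Perm (Fin 3)) = Equiv.swap 0 1) from by decide,
      show ¬(Equiv.swap (1:Fin 3) 2 = Equiv.swap 0 1) from by decide,
      show ¬(Equiv.swap (0:Fin 3) 2 = Equiv.swap 0 1) from by decide,
      show ¬(finRotate 3 = Equiv.swap (0:Fin 3) 1) from by decide,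
      show ¬((finRotate 3)⁻¹ = Equiv.swap (0:Fin 3) 1) from by decide,
      show ¬((1:Equiv.Perm (Fin 3)) = Equiv.swap 0 2) from by decide,
      show ¬(Equiv.swap (1:Fin 3) 2 = Equiv.swap 0 2) from by decide,
      show ¬(Equiv.swap (0:Fin 3) 1 = Equiv.swap 0 2) from by decide,
      show ¬(finRotate 3 = Equiv.swap (0:Fin 3) 2) from by decide,
      show ¬((finRotate 3)⁻¹ = Equiv.swap (0:Fin 3) 2) from by decide,
      show ¬((1:Equiv.Perm (Fin 3)) = Equiv.swap 1 2) from by decide,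
      show ¬(Equiv.swap (0:Fin 3) 1 = Equiv.swap 1 2) from by decide,
      show ¬(Equiv.swap (0:Fin 3) 2 = Equiv.swap 1 2) from by decide,
      show ¬(finRotate 3 = Equiv.swap (1:Fin 3) 2) from by decide,
      show ¬((finRotate 3)⁻¹ = Equiv.swap (1:Fin 3) 2) from by decide,
      show ¬((1:Equiv.Perm (Fin 3)) = finRotate 3) from by decide,
      show ¬(Equiv.swap (0:Fin 3) 1 = finRotate 3) from by decide,
      show ¬(Equiv.swap (0:Fin 3) 2 = finRotate 3) from by decide,
      show ¬(Equiv.swap (1:Fin 3) 2 = finRotate 3) from by decide,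
      show ¬((finRotate 3)⁻¹ = finRotate 3) from by decide,
      show ¬((1:Equiv.Perm (Fin 3)) = (finRotate 3)⁻¹) from by decide,
      show ¬(Equiv.swap (0:Fin 3) 1 = (finRotate 3)⁻¹) from by decide,
      show ¬(Equiv.swap (0:Fin 3) 2 = (finRotate 3)⁻¹) from by decide,
      show ¬(Equiv.swap (1:Fin 3) 2 = (finRotate 3)⁻¹) from by decide,
      show ¬(finRotate 3 = (finRotate 3)⁻¹) from by decide] at h
    rw [show (fun i => v i) = v from rfl] at h
    have e1 : (fun i => v ((finRotate 3) i)) = fun i => v (i + 1) := by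
      funext i; fin_cases i <;> rfl
    have e2 : (fun i => v ((finRotate 3)⁻¹ i)) = fun i => v (i - 1) := by
      funext i; fin_cases i <;> rfl
    rw [e1, e2]
    linear_combination -3 * h
  intro x y z
  have h1 := key ![x, y, z]
  have h2 := key ![x, z, y]
  have h3 := key ![y, x, z]
  have h4 := key ![z, y, x]
  have h5 := key ![y, z, x]
  have h6 := key ![z, x, y]
  simp only [tup12, tup01, tup02, tupc, tupci] at h1 h2 h3 h4 h5 h6
  have hden : ν^2 - 1 ≠ 0 := by
    intro h; apply hν1
    have : (ν - 1) * (ν + 1) = 0 := by ring_nf; linarith [h]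
    rcases mul_eq_zero.mp this with h' | h'
    · linarith
    · exact absurd (by linarith : ν = -1) hν2
  refine ⟨?_, ?_, ?_, ?_⟩
  · field_simp
    linear_combination ((ν + ν^2)/3) * h3 + ((ν - 2)/3) * h4 + ((2*ν - 1)/3) * h5 -
      ((ν + ν^2)/3) * h6
  · field_simp
    linear_combination ((1 + ν)/3) * h3 + ((ν^2 - 2*ν)/3) * h4 + ((ν^2 - ν + 1)/3) * h5 +
      ((ν^2 - ν - 2)/3) * h6
  · field_simp
    linear_combination (-(ν + ν^2)/3) * h3 + ((2*ν - 1)/3) * h4 + ((ν - 2)/3) * h5 +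
      ((ν + ν^2)/3) * h6
  · field_simp
    linear_combination ((ν^2 - ν - 2)/3) * h3 + ((ν^2 - ν + 1)/3) * h4 + ((ν^2 - 2*ν)/3) * h5 +
      ((1 + ν)/3) * h6
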